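/- Let f : X → Y be a proper local homeomorphism between Hausdorff topological spaces. Then f has the path-lifting property: for every continuous α : [0,1] → Y and every x₀ ∈ X with f(x₀) = α(0), there exists a continuous α̃ : [0,1] → X with f ∘ α̃ = α and α̃(0) = x₀. -/
import Mathlib

open Set Filter Topology

private lemma contOn_union_closed {A B : Type*} [TopologicalSpace A] [TopologicalSpace B]
    {f : A → B} {s t : Set A} (hs : IsClosed s) (ht : IsClosed t)
    (hfs : ContinuousOn f s) (hft : ContinuousOn f t) : ContinuousOn f (s ∪ t) := by
  intro x hx
  rw [continuousWithinAt_union]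
  constructor
  · by_cases h : x ∈ s
    · exact hfs x h
    · exact continuousWithinAt_of_notMem_closure (by rwa [hs.closure_eq])
  · by_cases h : x ∈ t
    · exact hft x h
    · exact continuousWithinAt_of_notMem_closure (by rwa [ht.closure_eq])

/-- A proper local homeomorphism between Hausdorff spaces has the path-lifting
property. -/
theorem path_lifting_of_proper {X Y : Type*} [TopologicalSpace X] [TopologicalSpace Y]
    [T2Space X] [T2Space Y]
    (f : X → Y) (hf : IsLocalHomeomorph f)
    (hproper : ∀ K : Set Y, IsCompact K → IsCompact (f ⁻¹' K)) :
    ∀ α : unitInterval → Y, Continuous α → ∀ x₀ : X, f x₀ = α 0 →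
      ∃ αt : unitInterval → X, Continuous αt ∧ f ∘ αt = α ∧ αt 0 = x₀ := by
  intro α hα x₀ hx₀
  set β : ℝ → Y := fun t => α (Set.projIcc 0 1 zero_le_one t) with hβdef
  have hβc : Continuous β := hα.comp continuous_projIcc
  have hβ0 : β 0 = α 0 := by
    simp only [hβdef, Set.projIcc_left]; rfl
  have sep : IsSeparatedMap f := T2Space.isSeparatedMap f
  have inj : IsLocallyInjective f := hf.isLocallyInjective
  -- the set of times up to which a lift exists
  set A : Set ℝ := {t | 0 ≤ t ∧ ∃ g : ℝ → X, ContinuousOn g (Icc 0 t) ∧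
      (∀ s ∈ Icc 0 t, f (g s) = β s) ∧ g 0 = x₀} with hAdef
  have h0A : (0:ℝ) ∈ A := by
    refine ⟨le_refl 0, fun _ => x₀, continuousOn_const, ?_, rfl⟩
    rintro s ⟨h1, h2⟩
    rw [le_antisymm h2 h1, hβ0, hx₀]
  have hlower : ∀ t ∈ A, ∀ s, 0 ≤ s → s ≤ t → s ∈ A := by
    rintro t ⟨ht0, g, hg, hfg, hg0⟩ s hs0 hst
    exact ⟨hs0, g, hg.mono (Icc_subset_Icc_right hst),
      fun u hu => hfg u ⟨hu.1, hu.2.trans hst⟩, hg0⟩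
  -- uniqueness of lifts
  have huniq : ∀ t₁ t₂ : ℝ, 0 ≤ t₁ → t₁ ≤ t₂ → ∀ g₁ g₂ : ℝ → X,
      ContinuousOn g₁ (Icc 0 t₁) → ContinuousOn g₂ (Icc 0 t₂) →
      (∀ s ∈ Icc 0 t₁, f (g₁ s) = β s) → (∀ s ∈ Icc 0 t₂, f (g₂ s) = β s) →
      g₁ 0 = x₀ → g₂ 0 = x₀ → EqOn g₁ g₂ (Icc 0 t₁) := by
    intro t₁ t₂ ht₁ ht₁₂ g₁ g₂ hg₁ hg₂ hfg₁ hfg₂ hg₁0 hg₂0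
    refine sep.eqOn_of_comp_eqOn inj isPreconnected_Icc hg₁
      (hg₂.mono (Icc_subset_Icc_right ht₁₂)) ?_ (left_mem_Icc.2 ht₁) (hg₁0.trans hg₂0.symm)
    intro s hs
    show f (g₁ s) = f (g₂ s)
    rw [hfg₁ s hs, hfg₂ s ⟨hs.1, hs.2.trans ht₁₂⟩]
  -- extension of a lift past any time
  have hext : ∀ t ∈ A, ∃ δ > (0:ℝ), t + δ ∈ A := by
    rintro t ⟨ht0, g, hg, hfg, hg0⟩
    obtain ⟨e, hxe, hfe⟩ := hf (g t)
    have hβt : β t ∈ e.target := by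
      rw [← hfg t ⟨ht0, le_refl t⟩, hfe]
      exact e.map_source hxe
    have hmem : {s : ℝ | β s ∈ e.target} ∈ 𝓝 t :=
      (e.open_target.preimage hβc).mem_nhds hβt
    obtain ⟨ε, hε, hball⟩ := Metric.mem_nhds_iff.1 hmem
    refine ⟨ε/2, by positivity, ht0.trans (by linarith), ?_⟩
    set δ := ε/2 with hδdef
    have hsub : Icc t (t + δ) ⊆ {s : ℝ | β s ∈ e.target} := by
      intro s hs
      apply hball
      rw [Metric.mem_ball, Real.dist_eq, abs_lt]
      constructor
      · linarith [hs.1]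
      · have := hs.2; simp only [hδdef] at this ⊢; linarith
    set h : ℝ → X := fun s => e.symm (β s) with hhdef
    have hhc : ContinuousOn h (Icc t (t + δ)) :=
      e.continuousOn_symm.comp hβc.continuousOn hsub
    have hgt : e.symm (β t) = g t := by
      rw [← hfg t ⟨ht0, le_refl t⟩, hfe]
      exact e.left_inv hxe
    set g' : ℝ → X := fun s => if s ≤ t then g s else h s with hg'def
    have hEq1 : EqOn g' g (Icc 0 t) := fun s hs => if_pos hs.2
    have hEq2 : EqOn g' h (Icc t (t + δ)) := by
      intro s hs
      show (if s ≤ t then g s else h s) = h s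
      by_cases hst : s ≤ t
      · have hst' : s = t := le_antisymm hst hs.1
        rw [if_pos hst, hst']
        exact hgt.symm
      · exact if_neg hst
    have hcover : Icc 0 (t + δ) ⊆ Icc 0 t ∪ Icc t (t + δ) := by
      intro s hs
      rcases le_total s t with h'|h'
      · exact Or.inl ⟨hs.1, h'⟩
      · exact Or.inr ⟨h', hs.2⟩
    refine ⟨g', ?_, ?_, ?_⟩
    · refine (contOn_union_closed isClosed_Icc isClosed_Icc
        (hg.congr hEq1) (hhc.congr hEq2)).mono hcover
    · intro s hs
      by_cases hst : s ≤ t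
      · rw [hEq1 ⟨hs.1, hst⟩, hfg s ⟨hs.1, hst⟩]
      · have hs' : s ∈ Icc t (t + δ) := ⟨le_of_not_ge hst, hs.2⟩
        rw [hEq2 hs', hhdef]
        show f (e.symm (β s)) = β s
        rw [hfe]
        exact e.right_inv (hsub hs')
    · show g' 0 = x₀
      rw [hEq1 (left_mem_Icc.2 ht0), hg0]
  -- the supremum
  set A' := A ∩ Icc (0:ℝ) 1 with hA'def
  have hA'ne : A'.Nonempty := ⟨0, h0A, left_mem_Icc.2 zero_le_one⟩
  have hA'bdd : BddAbove A' := ⟨1, fun x hx => hx.2.2⟩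
  set T := sSup A' with hTdef
  have hT0 : 0 ≤ T := le_csSup hA'bdd ⟨h0A, left_mem_Icc.2 zero_le_one⟩
  have hT1 : T ≤ 1 := csSup_le hA'ne fun x hx => hx.2.2
  -- T ∈ A
  have hTA : T ∈ A := by
    rcases eq_or_lt_of_le hT0 with h|hTpos
    · rw [← h]; exact h0A
    -- every s in [0, T) is in A
    have hIoT : ∀ s, 0 ≤ s → s < T → s ∈ A := by
      intro s hs0 hsT
      obtain ⟨a, ha, hsa⟩ := exists_lt_of_lt_csSup hA'ne hsT
      exact hlower a ha.1 s hs0 hsa.le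
    -- choose lifts at each level below T
    have key : ∀ t : ℝ, ∃ g : ℝ → X, t ∈ Ico 0 T → ContinuousOn g (Icc 0 t) ∧
        (∀ s ∈ Icc 0 t, f (g s) = β s) ∧ g 0 = x₀ := by
      intro t
      by_cases h : t ∈ Ico 0 T
      · obtain ⟨_, g, h1, h2, h3⟩ := hIoT t h.1 h.2
        exact ⟨g, fun _ => ⟨h1, h2, h3⟩⟩
      · exact ⟨fun _ => x₀, fun h' => absurd h' h⟩
    choose L hL using key
    have hcomp : ∀ t₁ t₂, t₁ ∈ Ico 0 T → t₂ ∈ Ico 0 T → t₁ ≤ t₂ →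
        EqOn (L t₁) (L t₂) (Icc 0 t₁) := by
      intro t₁ t₂ h₁ h₂ h₁₂
      exact huniq t₁ t₂ h₁.1 h₁₂ _ _ (hL t₁ h₁).1 (hL t₂ h₂).1
        (hL t₁ h₁).2.1 (hL t₂ h₂).2.1 (hL t₁ h₁).2.2 (hL t₂ h₂).2.2
    set G : ℝ → X := fun s => L ((s + T)/2) s with hGdef
    have hmid : ∀ s ∈ Ico 0 T, (s + T)/2 ∈ Ico 0 T ∧ s ≤ (s + T)/2 := by
      rintro s ⟨hs0, hsT⟩
      refine ⟨⟨by linarith, by linarith⟩, by linarith⟩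
    have hGeq : ∀ u ∈ Ico 0 T, EqOn G (L u) (Icc 0 u) := by
      rintro u hu s hs
      have hsI : s ∈ Ico 0 T := ⟨hs.1, lt_of_le_of_lt hs.2 hu.2⟩
      obtain ⟨hmI, hsm⟩ := hmid s hsI
      rcases le_total ((s + T)/2) u with h'|h'
      · exact hcomp _ u hmI hu h' ⟨hs.1, hsm⟩
      · exact (hcomp u _ hu hmI h' hs).symm
    have hGcont : ContinuousOn G (Ico 0 T) := by
      intro s₀ hs₀
      obtain ⟨u, hs₀u, huT⟩ := exists_between hs₀.2
      have huI : u ∈ Ico 0 T := ⟨hs₀.1.trans hs₀u.le, huT⟩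
      have h1 : ContinuousWithinAt (L u) (Icc 0 u) s₀ :=
        (hL u huI).1 s₀ ⟨hs₀.1, hs₀u.le⟩
      have h2 : ContinuousWithinAt G (Icc 0 u) s₀ :=
        h1.congr (fun s hs => hGeq u huI hs) (hGeq u huI ⟨hs₀.1, hs₀u.le⟩)
      apply h2.mono_of_mem_nhdsWithin
      have : Iic u ∈ 𝓝[Ico 0 T] s₀ :=
        mem_nhdsWithin_of_mem_nhds (Iic_mem_nhds hs₀u)
      have h3 : Ico 0 T ∩ Iic u ∈ 𝓝[Ico 0 T] s₀ :=
        inter_mem self_mem_nhdsWithin this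
      refine mem_of_superset h3 ?_
      rintro s ⟨hs1, hs2⟩
      exact ⟨hs1.1, hs2⟩
    have hfG : ∀ s ∈ Ico 0 T, f (G s) = β s := by
      intro s hs
      rw [hGeq s hs (right_mem_Icc.2 hs.1)]
      exact (hL s hs).2.1 s (right_mem_Icc.2 hs.1)
    have hG0 : G 0 = x₀ := by
      show L ((0 + T)/2) 0 = x₀
      have : (0 + T)/2 ∈ Ico 0 T := by constructor <;> [linarith; linarith]
      exact (hL _ this).2.2
    -- cluster point
    have hC : IsCompact (f ⁻¹' (β '' Icc 0 T)) := hproper _ (isCompact_Icc.image hβc)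
    have hne : (𝓝[Ioo 0 T] T).NeBot := by
      rw [← mem_closure_iff_nhdsWithin_neBot, closure_Ioo hTpos.ne]
      exact ⟨hT0, le_refl T⟩
    have hmaps : Filter.map G (𝓝[Ioo 0 T] T) ≤ 𝓟 (f ⁻¹' (β '' Icc 0 T)) := by
      rw [Filter.le_principal_iff, Filter.mem_map]
      filter_upwards [self_mem_nhdsWithin] with s hs
      exact mem_preimage.2 ⟨s, ⟨hs.1.le, hs.2.le⟩, (hfG s ⟨hs.1.le, hs.2⟩).symm⟩
    haveI := hne
    obtain ⟨x₁, hx₁C, hx₁⟩ := hC.exists_mapClusterPt hmaps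
    have hfx₁ : f x₁ = β T := by
      have h1 : MapClusterPt (f x₁) (𝓝[Ioo 0 T] T) (f ∘ G) :=
        hx₁.continuousAt_comp hf.continuous.continuousAt
      have h2 : Tendsto (f ∘ G) (𝓝[Ioo 0 T] T) (𝓝 (β T)) := by
        apply Tendsto.congr' _ ((hβc.tendsto T).mono_left nhdsWithin_le_nhds)
        filter_upwards [self_mem_nhdsWithin] with s hs
        exact (hfG s ⟨hs.1.le, hs.2⟩).symm
      exact eq_of_nhds_neBot (h1.clusterPt.mono h2).neBot
    obtain ⟨e, hx₁e, hfe⟩ := hf x₁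
    have hβT : β T ∈ e.target := by
      rw [← hfx₁, hfe]; exact e.map_source hx₁e
    obtain ⟨ε, hε, hball⟩ := Metric.mem_nhds_iff.1
      ((e.open_target.preimage hβc).mem_nhds hβT)
    set s₁ : ℝ := max (T - ε/2) (T/2) with hs₁def
    have hs₁0 : 0 < s₁ := lt_max_of_lt_right (by linarith)
    have hs₁T : s₁ < T := max_lt (by linarith) (by linarith)
    have hs₁ε : T - ε/2 ≤ s₁ := le_max_left _ _
    have hsub : Icc s₁ T ⊆ {s : ℝ | β s ∈ e.target} := by
      intro s hs
      apply hball
      rw [Metric.mem_ball, Real.dist_eq, abs_lt]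
      constructor
      · linarith [hs.1]
      · linarith [hs.2]
    set h : ℝ → X := fun s => e.symm (β s) with hhdef
    have hhc : ContinuousOn h (Icc s₁ T) :=
      e.continuousOn_symm.comp hβc.continuousOn hsub
    have hfh : ∀ s ∈ Icc s₁ T, f (h s) = β s := by
      intro s hs
      show f (e.symm (β s)) = β s
      rw [hfe]
      exact e.right_inv (hsub hs)
    have hfreq : ∃ᶠ s in 𝓝[Ioo 0 T] T, G s ∈ e.source :=
      mapClusterPt_iff_frequently.1 hx₁ e.source (e.open_source.mem_nhds hx₁e)
    have hev : ∀ᶠ s in 𝓝[Ioo 0 T] T, s ∈ Ioo 0 T ∧ s₁ < s := by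
      filter_upwards [self_mem_nhdsWithin,
        mem_nhdsWithin_of_mem_nhds (Ioi_mem_nhds hs₁T)] with s h1 h2
      exact ⟨h1, h2⟩
    obtain ⟨s₂, hs₂e, hs₂I, hs₂s₁⟩ := (hfreq.and_eventually hev).exists
    have hGs₂ : G s₂ = h s₂ := by
      show G s₂ = e.symm (β s₂)
      rw [← hfG s₂ ⟨hs₂I.1.le, hs₂I.2⟩, hfe]
      exact (e.left_inv hs₂e).symm
    have hEqGh : EqOn G h (Ico s₁ T) := by
      refine sep.eqOn_of_comp_eqOn inj isPreconnected_Ico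
        (hGcont.mono ?_) (hhc.mono Ico_subset_Icc_self) ?_ ⟨hs₂s₁.le, hs₂I.2⟩ hGs₂
      · intro s hs
        exact ⟨hs₁0.le.trans hs.1, hs.2⟩
      · intro s hs
        show f (G s) = f (h s)
        rw [hfG s ⟨hs₁0.le.trans hs.1, hs.2⟩, hfh s ⟨hs.1, hs.2.le⟩]
    set g' : ℝ → X := fun s => if s ≤ s₁ then G s else h s with hg'def
    have hEq1 : EqOn g' G (Icc 0 s₁) := fun s hs => if_pos hs.2
    have hEq2 : EqOn g' h (Icc s₁ T) := by
      intro s hs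
      show (if s ≤ s₁ then G s else h s) = h s
      by_cases hss : s ≤ s₁
      · have hss' : s = s₁ := le_antisymm hss hs.1
        rw [if_pos hss, hss']
        exact hEqGh ⟨le_refl s₁, hs₁T⟩
      · exact if_neg hss
    have hcover : Icc 0 T ⊆ Icc 0 s₁ ∪ Icc s₁ T := by
      intro s hs
      rcases le_total s s₁ with h'|h'
      · exact Or.inl ⟨hs.1, h'⟩
      · exact Or.inr ⟨h', hs.2⟩
    refine ⟨hT0, g', ?_, ?_, ?_⟩
    · exact (contOn_union_closed isClosed_Icc isClosed_Icc
        ((hGcont.mono (fun s hs => ⟨hs.1, lt_of_le_of_lt hs.2 hs₁T⟩)).congr hEq1)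
        (hhc.congr hEq2)).mono hcover
    · intro s hs
      by_cases hss : s ≤ s₁
      · rw [hEq1 ⟨hs.1, hss⟩]
        exact hfG s ⟨hs.1, lt_of_le_of_lt hss hs₁T⟩
      · have hs' : s ∈ Icc s₁ T := ⟨le_of_not_ge hss, hs.2⟩
        rw [hEq2 hs']
        exact hfh s hs'
    · show (if (0:ℝ) ≤ s₁ then G 0 else h 0) = x₀
      rw [if_pos hs₁0.le, hG0]
  -- T must equal 1
  have hTeq : T = 1 := by
    by_contra hne1
    have hTlt : T < 1 := lt_of_le_of_ne hT1 hne1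
    obtain ⟨δ, hδ, hTδ⟩ := hext T hTA
    have ht'A : min (T + δ) 1 ∈ A :=
      hlower _ hTδ _ (le_min (by linarith) zero_le_one) (min_le_left _ _)
    have h1 : min (T + δ) 1 ≤ T :=
      le_csSup hA'bdd ⟨ht'A, le_min (by linarith) zero_le_one, min_le_right _ _⟩
    have h2 : T < min (T + δ) 1 := lt_min (by linarith) hTlt
    linarith
  rw [hTeq] at hTA
  obtain ⟨-, g, hg, hfg, hg0⟩ := hTA
  refine ⟨fun s => g s, ?_, ?_, ?_⟩
  · exact hg.comp_continuous continuous_subtype_val (fun s => s.2)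
  · funext s
    show f (g s) = α s
    rw [hfg s s.2]
    show α (Set.projIcc 0 1 zero_le_one s) = α s
    rw [Set.projIcc_val]
  · show g ((0 : unitInterval) : ℝ) = x₀
    simpa using hg0
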